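/- Let N = 2 and let θ = (θ₁, θ₂) ∈ ℝ² satisfy cos(θ₁ − θ₂) ≠ 1. Then θ is a critical point of V (i.e. both partial derivatives of V vanish at θ) if and only if sin(θ₁ − θ₂) = 0 or cos(θ₁ − θ₂) = 1/2. -/

import Mathlib

open Real Finset

/-- The limit potential of the (1+N)-vortex problem:
`V(θ) = -∑_{i<j} (cos(θᵢ-θⱼ) + (1/2)·log(2 - 2cos(θᵢ-θⱼ)))`. -/
noncomputable def vortexPotential (N : ℕ) (θ : Fin N → ℝ) : ℝ :=
  - ∑ i : Fin N, ∑ j : Fin N,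
      if i < j then
        Real.cos (θ i - θ j) + (1 / 2) * Real.log (2 - 2 * Real.cos (θ i - θ j))
      else 0

/-- For `N = 2` and `θ` with `cos(θ₁-θ₂) ≠ 1`, the point `θ` is a critical
point of `V` (both partial derivatives vanish) if and only if `sin(θ₁-θ₂) = 0` or
`cos(θ₁-θ₂) = 1/2`. -/
theorem two_vortex_critical_points (θ : Fin 2 → ℝ)
    (hθ : Real.cos (θ 0 - θ 1) ≠ 1) :
    (∀ j : Fin 2, fderiv ℝ (vortexPotential 2) θ (Pi.single j 1) = 0) ↔
      (Real.sin (θ 0 - θ 1) = 0 ∨ Real.cos (θ 0 - θ 1) = 1 / 2) := by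
  set d := θ 0 - θ 1 with hd
  have h2 : 2 - 2 * Real.cos d ≠ 0 := by
    intro h
    apply hθ
    have : Real.cos d = 1 := by linarith
    simpa [hd] using this
  have hV : vortexPotential 2 = fun η : Fin 2 → ℝ =>
      -(Real.cos (η 0 - η 1) + (1 / 2) * Real.log (2 - 2 * Real.cos (η 0 - η 1))) := by
    funext η
    simp only [vortexPotential, Fin.sum_univ_two]
    norm_num
  -- the scalar derivative
  set r : ℝ := Real.sin d - Real.sin d / (2 - 2 * Real.cos d) with hr
  have hcos : HasDerivAt Real.cos (-Real.sin d) d := Real.hasDerivAt_cos d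
  have hinner : HasDerivAt (fun t => 2 - 2 * Real.cos t) (2 * Real.sin d) d := by
    have := (hcos.const_mul 2)
    have h := (hasDerivAt_const d (2:ℝ)).sub this
    simpa using this.const_sub 2
  have hlog : HasDerivAt (fun t => Real.log (2 - 2 * Real.cos t))
      ((2 * Real.sin d) / (2 - 2 * Real.cos d)) d := hinner.log h2
  have hg : HasDerivAt (fun t => -(Real.cos t + (1 / 2) * Real.log (2 - 2 * Real.cos t))) r d := by
    have h := (hcos.add (hlog.const_mul (1 / 2))).neg
    refine h.congr_deriv ?_
    rw [hr]
    field_simp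
    ring
  -- the linear map θ ↦ θ 0 - θ 1
  set L : (Fin 2 → ℝ) →L[ℝ] ℝ :=
    ContinuousLinearMap.proj (R := ℝ) (φ := fun _ : Fin 2 => ℝ) 0 -
      ContinuousLinearMap.proj (R := ℝ) (φ := fun _ : Fin 2 => ℝ) 1 with hL
  have hLd : HasFDerivAt (fun η : Fin 2 → ℝ => η 0 - η 1) L θ :=
 by exact L.hasFDerivAt
  have hF : HasFDerivAt (vortexPotential 2) (r • L) θ := by
    rw [hV]
    exact hg.comp_hasFDerivAt (f := fun η : Fin 2 → ℝ => η 0 - η 1) θ hLd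
  have hfd : fderiv ℝ (vortexPotential 2) θ = r • L := hF.fderiv
  have h0 : fderiv ℝ (vortexPotential 2) θ (Pi.single 0 1) = r := by
    simp [hfd, hL, Pi.single_apply]
  have h1 : fderiv ℝ (vortexPotential 2) θ (Pi.single 1 1) = -r := by
    simp [hfd, hL, Pi.single_apply]
  constructor
  · intro h
    have hr0 : r = 0 := by rw [← h0]; exact h 0
    have : Real.sin d * (2 - 2 * Real.cos d - 1) = 0 := by
      have := hr0
      rw [hr] at this
      field_simp at this
      linarith [this]
    rcases mul_eq_zero.1 this with hs | hc
    · exact Or.inl hs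
    · right; linarith
  · intro h j
    have hr0 : r = 0 := by
      rw [hr]
      rcases h with hs | hc
      · rw [hs]; simp
      · rw [hc]; norm_num
    simp [hfd, hr0]
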